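/- For every natural number t ≥ 1, t^t · t! / (2t)! ≤ (e/4)^t, where e = exp 1. In particular this success probability is exponentially small in t. -/

import Mathlib

open Real Finset

private lemma logstep (a b : ℝ) (ha : -1 < a) (hab : a ≤ b) :
    (1+b) * Real.log (1+b) - (1+a) * Real.log (1+a) - (b - a)
      ≤ (b - a) * Real.log (1+b) := by
  have h0a : (0:ℝ) < 1 + a := by linarith
  have h0b : (0:ℝ) < 1 + b := by linarith
  have h := Real.log_le_sub_one_of_pos (show (0:ℝ) < (1+b)/(1+a) by positivity)
  rw [Real.log_div (ne_of_gt h0b) (ne_of_gt h0a)] at h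
  have h2 : (1+a) * (Real.log (1+b) - Real.log (1+a)) ≤ b - a := by
    have h3 := mul_le_mul_of_nonneg_left h (le_of_lt h0a)
    have h4 : (1+a) * ((1+b)/(1+a) - 1) = b - a := by field_simp; ring
    linarith [h3, h4.le, h4.ge]
  nlinarith [h2]

private lemma sum_log_ge (t : ℕ) (ht : 1 ≤ t) :
    (t : ℝ) * (2 * Real.log 2 - 1)
      ≤ ∑ j ∈ Finset.range t, Real.log (1 + ((j:ℝ)+1) / t) := by
  have htpos : (0:ℝ) < t := by exact_mod_cast ht
  set f : ℝ → ℝ := fun x => (1+x) * Real.log (1+x) - x with hf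
  have tele : ∑ j ∈ Finset.range t, (f (((j:ℝ)+1)/t) - f ((j:ℝ)/t))
      = f ((t:ℝ)/t) - f 0 := by
    have := Finset.sum_range_sub (fun j : ℕ => f ((j:ℝ)/t)) t
    simpa using this
  have hf1 : f ((t:ℝ)/t) = 2 * Real.log 2 - 1 := by
    rw [div_self (ne_of_gt htpos)]
    show (1+1) * Real.log (1+1) - 1 = 2 * Real.log 2 - 1
    norm_num
  have hf0 : f 0 = 0 := by simp [hf]
  have step : ∀ j ∈ Finset.range t,
      f (((j:ℝ)+1)/t) - f ((j:ℝ)/t) ≤ (1/t) * Real.log (1 + ((j:ℝ)+1)/t) := by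
    intro j _
    have ha : (-1:ℝ) < (j:ℝ)/t := by
      have : (0:ℝ) ≤ (j:ℝ)/t := by positivity
      linarith
    have hab : (j:ℝ)/t ≤ ((j:ℝ)+1)/t := by gcongr; linarith
    have key := logstep ((j:ℝ)/t) (((j:ℝ)+1)/t) ha hab
    have hsub : ((j:ℝ)+1)/t - (j:ℝ)/t = 1/t := by field_simp; ring
    show (1+((j:ℝ)+1)/t) * Real.log (1+((j:ℝ)+1)/t) - (((j:ℝ)+1)/t)
        - ((1+(j:ℝ)/t) * Real.log (1+(j:ℝ)/t) - (j:ℝ)/t)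
        ≤ (1/t) * Real.log (1 + ((j:ℝ)+1)/t)
    calc (1+((j:ℝ)+1)/t) * Real.log (1+((j:ℝ)+1)/t) - (((j:ℝ)+1)/t)
          - ((1+(j:ℝ)/t) * Real.log (1+(j:ℝ)/t) - (j:ℝ)/t)
        = (1+((j:ℝ)+1)/t) * Real.log (1+((j:ℝ)+1)/t)
          - (1+(j:ℝ)/t) * Real.log (1+(j:ℝ)/t) - (((j:ℝ)+1)/t - (j:ℝ)/t) := by ring
      _ ≤ (((j:ℝ)+1)/t - (j:ℝ)/t) * Real.log (1+((j:ℝ)+1)/t) := key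
      _ = (1/t) * Real.log (1 + ((j:ℝ)+1)/t) := by rw [hsub]
  have hsum : f ((t:ℝ)/t) - f 0
      ≤ (1/t) * ∑ j ∈ Finset.range t, Real.log (1 + ((j:ℝ)+1)/t) := by
    rw [← tele, Finset.mul_sum]
    exact Finset.sum_le_sum step
  rw [hf1, hf0, sub_zero] at hsum
  calc (t:ℝ) * (2 * Real.log 2 - 1)
      ≤ (t:ℝ) * ((1/t) * ∑ j ∈ Finset.range t, Real.log (1 + ((j:ℝ)+1)/t)) :=
        mul_le_mul_of_nonneg_left hsum (le_of_lt htpos)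
    _ = ∑ j ∈ Finset.range t, Real.log (1 + ((j:ℝ)+1)/t) := by
        field_simp

private lemma factorial_add_eq (n k : ℕ) :
    (((n+k).factorial : ℝ)) = (n.factorial : ℝ) * ∏ j ∈ Finset.range k, ((n:ℝ)+j+1) := by
  induction k with
  | zero => simp
  | succ k ih =>
      rw [Finset.prod_range_succ, show n + (k+1) = (n+k) + 1 by ring, Nat.factorial_succ]
      push_cast
      rw [ih]
      ring

/-- For every `t ≥ 1`, `tᵗ · t! / (2t)! ≤ (e/4)ᵗ` where `e = exp 1`; in particular this
success probability is exponentially small in `t`. -/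
theorem weak_oracle_success_le (t : ℕ) (ht : 1 ≤ t) :
    (t : ℝ) ^ t * (t.factorial : ℝ) / ((2 * t).factorial : ℝ)
      ≤ (Real.exp 1 / 4) ^ t := by
  have htpos : (0:ℝ) < t := by exact_mod_cast ht
  have hfact : ((2*t).factorial : ℝ)
      = (t.factorial : ℝ) * ∏ j ∈ Finset.range t, ((t:ℝ)+j+1) := by
    rw [show 2*t = t + t by ring]
    exact factorial_add_eq t t
  have hprodeq : ∏ j ∈ Finset.range t, ((t:ℝ)+j+1)
      = (t:ℝ)^t * Real.exp (∑ j ∈ Finset.range t, Real.log (1 + ((j:ℝ)+1)/t)) := by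
    have hterm : ∀ j ∈ Finset.range t,
        ((t:ℝ)+j+1) = (t:ℝ) * Real.exp (Real.log (1 + ((j:ℝ)+1)/t)) := by
      intro j _
      rw [Real.exp_log (by positivity)]
      field_simp
      ring
    rw [Finset.prod_congr rfl hterm, Finset.prod_mul_distrib, Finset.prod_const,
      Finset.card_range, Real.exp_sum]
  have hexp_val : Real.exp ((t:ℝ) * (2 * Real.log 2 - 1)) = (4 / Real.exp 1)^t := by
    rw [Real.exp_nat_mul]
    congr 1
    rw [Real.exp_sub, two_mul, Real.exp_add, Real.exp_log (by norm_num : (0:ℝ) < 2)]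
    norm_num
  have hexp_ge : (4 / Real.exp 1)^t
      ≤ Real.exp (∑ j ∈ Finset.range t, Real.log (1 + ((j:ℝ)+1)/t)) := by
    rw [← hexp_val]
    exact Real.exp_le_exp.mpr (sum_log_ge t ht)
  have hPge : (t:ℝ)^t * (4/Real.exp 1)^t ≤ ∏ j ∈ Finset.range t, ((t:ℝ)+j+1) := by
    rw [hprodeq]
    exact mul_le_mul_of_nonneg_left hexp_ge (by positivity)
  have hPpos : (0:ℝ) < ∏ j ∈ Finset.range t, ((t:ℝ)+j+1) :=
    Finset.prod_pos (fun j _ => by positivity)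
  have hone : (Real.exp 1 / 4) * (4 / Real.exp 1) = 1 := by
    field_simp
  rw [hfact, div_le_iff₀ (mul_pos (by positivity) hPpos)]
  calc (t:ℝ)^t * (t.factorial : ℝ)
      = (Real.exp 1/4)^t * ((t.factorial : ℝ) * ((t:ℝ)^t * (4/Real.exp 1)^t)) := by
        rw [show (Real.exp 1/4)^t * ((t.factorial : ℝ) * ((t:ℝ)^t * (4/Real.exp 1)^t))
          = ((Real.exp 1/4) * (4/Real.exp 1))^t * ((t.factorial : ℝ) * (t:ℝ)^t) by
            rw [mul_pow]; ring]
        rw [hone, one_pow]; ring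
    _ ≤ (Real.exp 1/4)^t * ((t.factorial : ℝ) * ∏ j ∈ Finset.range t, ((t:ℝ)+j+1)) := by
        gcongr
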